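/- Let S be a set of N > d points of ℝ^d in general position and let n ≥ 2. The number of distinct labelings in {1,...,n}^N of S realizable by multi-class linear classifiers h(x) = argmax_{k ∈ {1,...,n}} (h_kᵀx + b_k) is at most [2^{d+1} · C(N, d)]^{n(n-1)/2}. -/

import Mathlib

lemma ann {W : Type} [AddCommGroup W] [Module ℝ W] {ι : Type} [Fintype ι] [DecidableEq ι]
    (g : ι → (W →ₗ[ℝ] ℝ)) (h : ¬ ∀ t : ι → ℝ, ∃ w, ∀ i, g i w = t i) :
    ∃ c : ι → ℝ, c ≠ 0 ∧ ∀ w, ∑ i, c i * g i w = 0 := by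
  have hlt : LinearMap.range (LinearMap.pi g) < ⊤ := by
    rcases lt_or_eq_of_le (le_top : LinearMap.range (LinearMap.pi g) ≤ ⊤) with h' | h'
    · exact h'
    · exact absurd (fun t => by
        obtain ⟨w, hw⟩ := (h' ▸ Submodule.mem_top : t ∈ LinearMap.range (LinearMap.pi g))
        exact ⟨w, fun i => congrFun hw i⟩) h
  obtain ⟨f, hf0, hf⟩ := Submodule.exists_dual_map_eq_bot_of_lt_top hlt inferInstance
  refine ⟨fun i => f (fun j => if i = j then 1 else 0), ?_, ?_⟩
  · intro hc
    apply hf0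
    refine LinearMap.ext fun y => ?_
    rw [LinearMap.pi_apply_eq_sum_univ f y]
    simp only [LinearMap.zero_apply]
    refine Finset.sum_eq_zero fun i _ => ?_
    have := congrFun hc i
    simp only [Pi.zero_apply] at this
    rw [this, smul_zero]
  · intro w
    have hmem : f (LinearMap.pi g w) ∈ Submodule.map f (LinearMap.range (LinearMap.pi g)) :=
      ⟨_, ⟨w, rfl⟩, rfl⟩
    rw [hf] at hmem
    have h0 : f (LinearMap.pi g w) = 0 := hmem
    have h1 : (∑ i, (fun i => f (fun j => if i = j then 1 else 0)) i * g i w)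
        = f (LinearMap.pi g w) := by
      rw [LinearMap.pi_apply_eq_sum_univ f (LinearMap.pi g w)]
      refine Finset.sum_congr rfl fun i _ => ?_
      rw [LinearMap.pi_apply, smul_eq_mul, mul_comm]
    rw [h1, h0]

lemma affCount : ∀ (M : ℕ) (m : ℕ) (W : Type) [AddCommGroup W] [Module ℝ W]
    (φ0 : W →ₗ[ℝ] ℝ) (ψ : Fin M → (W →ₗ[ℝ] ℝ)),
    (∀ S : Finset (Fin M), S.card ≤ m → ∀ (r : ℝ) (t : Fin M → ℝ),
        ∃ w, φ0 w = r ∧ ∀ i ∈ S, ψ i w = t i) →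
    (∀ S : Finset (Fin M), S.card = m + 1 → ¬ ∀ (r : ℝ) (t : Fin M → ℝ),
        ∃ w, φ0 w = r ∧ ∀ i ∈ S, ψ i w = t i) →
    {σ : Fin M → Bool | ∃ w, φ0 w = 1 ∧ ∀ i, (σ i = true ↔ 0 < ψ i w) ∧ ψ i w ≠ 0}.ncard
      ≤ ∑ j ∈ Finset.range (m + 1), M.choose j := by
  intro M
  induction M with
  | zero =>
    intro m W _ _ φ0 ψ _ _
    have h1 : {σ : Fin 0 → Bool | ∃ w, φ0 w = 1 ∧ ∀ i, (σ i = true ↔ 0 < ψ i w) ∧ ψ i w ≠ 0}.ncard ≤ 1 := by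
      rw [Set.ncard_le_one (Set.toFinite _)]
      intro a _ b _
      funext i
      exact absurd i.2 (by omega)
    refine h1.trans ?_
    have h2 : Nat.choose 0 0 ≤ ∑ j ∈ Finset.range (m+1), Nat.choose 0 j :=
      Finset.single_le_sum (f := fun j => Nat.choose 0 j) (fun _ _ => Nat.zero_le _)
        (Finset.mem_range.2 (Nat.succ_pos m))
    simpa using h2
  | succ M ih =>
    intro m W _ _ φ0 ψ ha hb
    obtain _ | m := m
    · -- m = 0 : subsingleton
      have key : ∀ i : Fin (M+1), ∃ c : ℝ, ∀ w, ψ i w = c * φ0 w := by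
        intro i
        have hbi := hb {i} (by simp)
        have hna : ¬ ∀ t : Fin 2 → ℝ, ∃ w, ∀ k, (![φ0, ψ i] k) w = t k := by
          intro hall
          apply hbi
          intro r t
          obtain ⟨w, hw⟩ := hall ![r, t i]
          refine ⟨w, by simpa using hw 0, fun j hj => ?_⟩
          rw [Finset.mem_singleton] at hj; subst hj; simpa using hw 1
        obtain ⟨c, hc0, hcw⟩ := ann ![φ0, ψ i] hna
        have hsum : ∀ w, c 0 * φ0 w + c 1 * ψ i w = 0 := by
          intro w
          have := hcw w
          rwa [Fin.sum_univ_two, Matrix.cons_val_zero, Matrix.cons_val_one, Matrix.cons_val_zero] at this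
        have hc1 : c 1 ≠ 0 := by
          intro h1
          obtain ⟨w, hw, -⟩ := ha ∅ (by simp) 1 0
          have := hsum w
          rw [h1, hw] at this
          have hc00 : c 0 = 0 := by linarith
          apply hc0
          funext k
          match k with
          | 0 => exact hc00
          | 1 => exact h1
        refine ⟨-(c 0) / c 1, fun w => ?_⟩
        have := hsum w
        field_simp
        linarith
      rw [Finset.sum_range_one, Nat.choose_zero_right]
      rw [Set.ncard_le_one (Set.toFinite _)]
      rintro a ⟨w, hw1, hw⟩ b ⟨w', hw'1, hw'⟩
      funext i
      obtain ⟨c, hc⟩ := key i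
      have e1 : ψ i w = c := by rw [hc w, hw1, mul_one]
      have e2 : ψ i w' = c := by rw [hc w', hw'1, mul_one]
      have hiff : a i = true ↔ 0 < c := e1 ▸ (hw i).1
      have hiff' : b i = true ↔ 0 < c := e2 ▸ (hw' i).1
      by_cases h0c : 0 < c
      · rw [hiff.2 h0c, hiff'.2 h0c]
      · have ha0 : a i = false := by
          rcases Bool.eq_false_or_eq_true (a i) with h | h
          · exact absurd (hiff.1 h) h0c
          · exact h
        have hb0 : b i = false := by
          rcases Bool.eq_false_or_eq_true (b i) with h | h
          · exact absurd (hiff'.1 h) h0c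
          · exact h
        rw [ha0, hb0]
    · -- inductive step at level m+1
      classical
      have ha1 : ∀ S : Finset (Fin M), S.card ≤ m + 1 → ∀ (r : ℝ) (t : Fin M → ℝ),
          ∃ w, φ0 w = r ∧ ∀ i ∈ S, ψ i.castSucc w = t i := by
        intro S hS r t
        obtain ⟨w, hw1, hw2⟩ := ha (S.map Fin.castSuccEmb) (by rwa [Finset.card_map]) r (Fin.snoc t 0)
        refine ⟨w, hw1, fun i hi => ?_⟩
        have := hw2 (Fin.castSuccEmb i) (Finset.mem_map_of_mem _ hi)
        have h2 : Fin.castSuccEmb i = i.castSucc := rfl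
        rw [h2] at this
        rwa [Fin.snoc_castSucc] at this
      have hb1 : ∀ S : Finset (Fin M), S.card = m + 1 + 1 → ¬ ∀ (r : ℝ) (t : Fin M → ℝ),
          ∃ w, φ0 w = r ∧ ∀ i ∈ S, ψ i.castSucc w = t i := by
        intro S hS hsurj
        apply hb (S.map Fin.castSuccEmb) (by rwa [Finset.card_map])
        intro r t
        obtain ⟨w, hw1, hw2⟩ := hsurj r (fun i => t i.castSucc)
        refine ⟨w, hw1, fun j hj => ?_⟩
        obtain ⟨i, hi, rfl⟩ := Finset.mem_map.1 hj
        exact hw2 i hi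
      set L : W →ₗ[ℝ] ℝ := ψ (Fin.last M) with hLdef
      set φ0' : ↥(LinearMap.ker L) →ₗ[ℝ] ℝ := φ0.comp (LinearMap.ker L).subtype with hφ0'
      set ψ' : Fin M → (↥(LinearMap.ker L) →ₗ[ℝ] ℝ) :=
        fun i => (ψ i.castSucc).comp (LinearMap.ker L).subtype with hψ'
      have hlastnotmem : ∀ S : Finset (Fin M), Fin.last M ∉ S.map Fin.castSuccEmb := by
        intro S hmem
        obtain ⟨i, _, hie⟩ := Finset.mem_map.1 hmem
        exact absurd hie (Fin.castSucc_lt_last i).ne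
      have ha2 : ∀ S : Finset (Fin M), S.card ≤ m → ∀ (r : ℝ) (t : Fin M → ℝ),
          ∃ w', φ0' w' = r ∧ ∀ i ∈ S, ψ' i w' = t i := by
        intro S hS r t
        obtain ⟨w, hw1, hw2⟩ := ha (insert (Fin.last M) (S.map Fin.castSuccEmb))
          (le_trans (Finset.card_insert_le _ _) (by rw [Finset.card_map]; omega)) r (Fin.snoc t 0)
        have hker : w ∈ LinearMap.ker L := by
          rw [LinearMap.mem_ker, hLdef]
          have := hw2 (Fin.last M) (Finset.mem_insert_self _ _)
          rwa [Fin.snoc_last] at this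
        refine ⟨⟨w, hker⟩, hw1, fun i hi => ?_⟩
        have := hw2 (Fin.castSuccEmb i) (Finset.mem_insert_of_mem (Finset.mem_map_of_mem _ hi))
        have h2 : Fin.castSuccEmb i = i.castSucc := rfl
        rw [h2, Fin.snoc_castSucc] at this
        simpa [hψ'] using this
      have hb2 : ∀ S : Finset (Fin M), S.card = m + 1 → ¬ ∀ (r : ℝ) (t : Fin M → ℝ),
          ∃ w', φ0' w' = r ∧ ∀ i ∈ S, ψ' i w' = t i := by
        intro S hS hsurj
        apply hb (insert (Fin.last M) (S.map Fin.castSuccEmb))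
          (by rw [Finset.card_insert_of_notMem (hlastnotmem S), Finset.card_map, hS])
        intro r t
        obtain ⟨w1, hw11, hw12⟩ := ha {Fin.last M} (by simp) 0 (fun _ => 1)
        have hw1last : ψ (Fin.last M) w1 = 1 := hw12 _ (Finset.mem_singleton_self _)
        obtain ⟨w0, hw01, hw02⟩ := hsurj r
          (fun i => t i.castSucc - t (Fin.last M) * ψ i.castSucc w1)
        refine ⟨(w0 : W) + t (Fin.last M) • w1, ?_, ?_⟩
        · have : φ0 (w0 : W) = r := hw01
          simp [map_add, map_smul, this, hw11, smul_eq_mul]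
        · intro j hj
          rcases Finset.mem_insert.1 hj with rfl | hj
          · have hker : ψ (Fin.last M) (w0 : W) = 0 := w0.2
            simp [map_add, map_smul, hker, hw1last, smul_eq_mul]
          · obtain ⟨i, hi, rfl⟩ := Finset.mem_map.1 hj
            have h2 : Fin.castSuccEmb i = i.castSucc := rfl
            have hv : ψ i.castSucc (w0 : W) = t i.castSucc - t (Fin.last M) * ψ i.castSucc w1 :=
              hw02 i hi
            rw [h2]
            rw [map_add, map_smul, hv, smul_eq_mul]
            ring
      have ihP : {τ : Fin M → Bool | ∃ w, φ0 w = 1 ∧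
            ∀ i, (τ i = true ↔ 0 < ψ i.castSucc w) ∧ ψ i.castSucc w ≠ 0}.ncard
          ≤ ∑ j ∈ Finset.range (m + 1 + 1), M.choose j :=
        ih (m+1) W φ0 (fun i => ψ i.castSucc) ha1 hb1
      have ihP' : {τ : Fin M → Bool | ∃ w', φ0' w' = 1 ∧
            ∀ i, (τ i = true ↔ 0 < ψ' i w') ∧ ψ' i w' ≠ 0}.ncard
          ≤ ∑ j ∈ Finset.range (m + 1), M.choose j :=
        ih m (↥(LinearMap.ker L)) φ0' ψ' ha2 hb2
      set P : Set (Fin M → Bool) := {τ | ∃ w, φ0 w = 1 ∧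
            ∀ i, (τ i = true ↔ 0 < ψ i.castSucc w) ∧ ψ i.castSucc w ≠ 0} with hP
      set P' : Set (Fin M → Bool) := {τ | ∃ w', φ0' w' = 1 ∧
            ∀ i, (τ i = true ↔ 0 < ψ' i w') ∧ ψ' i w' ≠ 0} with hP'
      set SS : Set (Fin (M+1) → Bool) :=
        {σ | ∃ w, φ0 w = 1 ∧ ∀ i, (σ i = true ↔ 0 < ψ i w) ∧ ψ i w ≠ 0} with hSS
      set s1 : Set (Fin (M+1) → Bool) := SS ∩ {σ | σ (Fin.last M) = true} with hs1
      set s0 : Set (Fin (M+1) → Bool) := SS ∩ {σ | σ (Fin.last M) = false} with hs0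
      set res : (Fin (M+1) → Bool) → (Fin M → Bool) := fun σ i => σ i.castSucc with hres
      have hsplit : SS = s1 ∪ s0 := by
        ext σ
        simp only [hs1, hs0, Set.mem_union, Set.mem_inter_iff, Set.mem_setOf_eq]
        constructor
        · intro h
          rcases Bool.eq_false_or_eq_true (σ (Fin.last M)) with h' | h'
          · exact Or.inl ⟨h, h'⟩
          · exact Or.inr ⟨h, h'⟩
        · rintro (⟨h, _⟩ | ⟨h, _⟩) <;> exact h
      have hdisj : Disjoint s1 s0 := by
        rw [Set.disjoint_left]
        rintro σ ⟨_, h1⟩ ⟨_, h0⟩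
        simp only [Set.mem_setOf_eq] at h1 h0
        rw [h1] at h0
        exact Bool.noConfusion h0
      have hinj : ∀ (bv : Bool) (σ σ' : Fin (M+1) → Bool), σ (Fin.last M) = bv →
          σ' (Fin.last M) = bv → res σ = res σ' → σ = σ' := by
        intro bv σ σ' h1 h2 hr
        funext i
        refine Fin.lastCases ?_ ?_ i
        · rw [h1, h2]
        · intro j
          exact congrFun hr j
      have hinj1 : Set.InjOn res s1 := fun σ hσ σ' hσ' h => hinj true σ σ' hσ.2 hσ'.2 h
      have hinj0 : Set.InjOn res s0 := fun σ hσ σ' hσ' h => hinj false σ σ' hσ.2 hσ'.2 h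
      have himP : (res '' s1) ∪ (res '' s0) ⊆ P := by
        rintro τ (⟨σ, ⟨⟨w, hw1, hw2⟩, _⟩, rfl⟩ | ⟨σ, ⟨⟨w, hw1, hw2⟩, _⟩, rfl⟩) <;>
          exact ⟨w, hw1, fun i => hw2 i.castSucc⟩
      have hinter : (res '' s1) ∩ (res '' s0) ⊆ P' := by
        rintro τ ⟨⟨σp, ⟨⟨wp, hwp1, hwp2⟩, hσp⟩, hresp⟩, ⟨σq, ⟨⟨wq, hwq1, hwq2⟩, hσq⟩, hresq⟩⟩
        simp only [Set.mem_setOf_eq] at hσp hσq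
        have hap : 0 < ψ (Fin.last M) wp := (hwp2 (Fin.last M)).1.1 hσp
        have hbq : ψ (Fin.last M) wq < 0 := by
          rcases lt_trichotomy (ψ (Fin.last M) wq) 0 with h | h | h
          · exact h
          · exact absurd h (hwq2 (Fin.last M)).2
          · rw [(hwq2 (Fin.last M)).1.2 h] at hσq
            exact absurd hσq (by simp)
        set a : ℝ := ψ (Fin.last M) wp with hadef
        set b : ℝ := ψ (Fin.last M) wq with hbdef
        have hab : 0 < a - b := by linarith
        have hp : 0 < a / (a - b) := div_pos hap hab
        have hq : 0 < -b / (a - b) := div_pos (by linarith) hab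
        have hpq : -b / (a - b) + a / (a - b) = 1 := by
          field_simp
          ring
        set w0 : W := (-b / (a - b)) • wp + (a / (a - b)) • wq with hw0
        have hker : w0 ∈ LinearMap.ker L := by
          rw [LinearMap.mem_ker, hLdef, hw0]
          rw [map_add, map_smul, map_smul, smul_eq_mul, smul_eq_mul, ← hadef, ← hbdef]
          field_simp
          ring
        refine ⟨⟨w0, hker⟩, ?_, ?_⟩
        · rw [hφ0']
          simp only [LinearMap.comp_apply, Submodule.coe_subtype]
          rw [hw0, map_add, map_smul, map_smul, smul_eq_mul, smul_eq_mul, hwp1, hwq1,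
            mul_one, mul_one]
          exact hpq
        · intro i
          have hτp : σp i.castSucc = τ i := congrFun hresp i
          have hτq : σq i.castSucc = τ i := congrFun hresq i
          have hval : ψ' i (⟨w0, hker⟩ : LinearMap.ker L)
              = (-b / (a - b)) * ψ i.castSucc wp + (a / (a - b)) * ψ i.castSucc wq := by
            rw [hψ']
            simp only [LinearMap.comp_apply, Submodule.coe_subtype]
            rw [hw0, map_add, map_smul, map_smul, smul_eq_mul, smul_eq_mul]
          rcases Bool.eq_false_or_eq_true (τ i) with hτ | hτ
          · have h1 : 0 < ψ i.castSucc wp := (hwp2 i.castSucc).1.1 (hτp.trans hτ)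
            have h2 : 0 < ψ i.castSucc wq := (hwq2 i.castSucc).1.1 (hτq.trans hτ)
            have hpos : 0 < ψ' i (⟨w0, hker⟩ : LinearMap.ker L) := by
              rw [hval]
              exact add_pos (mul_pos hq h1) (mul_pos hp h2)
            exact ⟨⟨fun _ => hpos, fun _ => hτ⟩, hpos.ne'⟩
          · have h1 : ψ i.castSucc wp < 0 := by
              rcases lt_trichotomy (ψ i.castSucc wp) 0 with h | h | h
              · exact h
              · exact absurd h (hwp2 i.castSucc).2
              · rw [(hwp2 i.castSucc).1.2 h] at hτp
                rw [← hτp] at hτ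
                exact absurd hτ (by simp)
            have h2 : ψ i.castSucc wq < 0 := by
              rcases lt_trichotomy (ψ i.castSucc wq) 0 with h | h | h
              · exact h
              · exact absurd h (hwq2 i.castSucc).2
              · rw [(hwq2 i.castSucc).1.2 h] at hτq
                rw [← hτq] at hτ
                exact absurd hτ (by simp)
            have hneg : ψ' i (⟨w0, hker⟩ : LinearMap.ker L) < 0 := by
              rw [hval]
              have := mul_neg_of_pos_of_neg hq h1
              have := mul_neg_of_pos_of_neg hp h2
              linarith
            refine ⟨⟨fun ht => ?_, fun hlt => absurd hlt (not_lt.2 hneg.le)⟩, hneg.ne⟩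
            rw [hτ] at ht
            exact absurd ht (by simp)
      have pascal : ∑ j ∈ Finset.range (m + 1 + 1), (M+1).choose j
          = ∑ j ∈ Finset.range (m + 1 + 1), M.choose j
            + ∑ j ∈ Finset.range (m + 1), M.choose j := by
        rw [Finset.sum_range_succ' (fun j => (M+1).choose j),
          Finset.sum_range_succ' (fun j => M.choose j)]
        simp only [Nat.choose_succ_succ, Nat.choose_zero_right, Finset.sum_add_distrib]
        ring
      calc SS.ncard = s1.ncard + s0.ncard := by
            rw [hsplit]
            exact Set.ncard_union_eq hdisj (Set.toFinite _) (Set.toFinite _)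
        _ = (res '' s1).ncard + (res '' s0).ncard := by
            rw [Set.ncard_image_of_injOn hinj1, Set.ncard_image_of_injOn hinj0]
        _ = ((res '' s1) ∪ (res '' s0)).ncard + ((res '' s1) ∩ (res '' s0)).ncard :=
            (Set.ncard_union_add_ncard_inter _ _ (Set.toFinite _) (Set.toFinite _)).symm
        _ ≤ P.ncard + P'.ncard :=
            add_le_add (Set.ncard_le_ncard himP (Set.toFinite _))
              (Set.ncard_le_ncard hinter (Set.toFinite _))
        _ ≤ ∑ j ∈ Finset.range (m + 1 + 1), M.choose j
              + ∑ j ∈ Finset.range (m + 1), M.choose j := add_le_add ihP ihP'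
        _ = ∑ j ∈ Finset.range (m + 1 + 1), (M+1).choose j := pascal.symm

noncomputable def phiMap {d : ℕ} (v : Fin d → ℝ) : ((Fin d → ℝ) × ℝ) →ₗ[ℝ] ℝ where
  toFun w := (∑ j, w.1 j * v j) + w.2
  map_add' w w' := by
    simp only [Prod.fst_add, Pi.add_apply, Prod.snd_add, add_mul, Finset.sum_add_distrib]
    ring
  map_smul' c w := by
    simp only [Prod.smul_fst, Pi.smul_apply, Prod.smul_snd, smul_eq_mul, RingHom.id_apply]
    rw [mul_add, Finset.mul_sum]
    congr 1
    exact Finset.sum_congr rfl fun j _ => by ring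

lemma phiMap_apply {d : ℕ} (v : Fin d → ℝ) (w : (Fin d → ℝ) × ℝ) :
    phiMap v w = (∑ j, w.1 j * v j) + w.2 := rfl

-- decomposition of a functional on the parameter space
lemma dual_decomp {d : ℕ} (f : ((Fin d → ℝ) × ℝ) →ₗ[ℝ] ℝ) (w : (Fin d → ℝ) × ℝ) :
    f w = (∑ j, w.1 j * f (fun j' => if j = j' then 1 else 0, 0)) + w.2 * f (0, 1) := by
  have h1 : f (w.1, 0) = ∑ j, w.1 j * f (fun j' => if j = j' then 1 else 0, 0) := by
    have e : ((w.1 : Fin d → ℝ), (0:ℝ)) = LinearMap.inl ℝ (Fin d → ℝ) ℝ w.1 := rfl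
    rw [e, ← LinearMap.comp_apply, LinearMap.pi_apply_eq_sum_univ]
    refine Finset.sum_congr rfl fun j _ => ?_
    rw [smul_eq_mul, LinearMap.comp_apply, LinearMap.inl_apply]
  have h2 : f (0, w.2) = w.2 * f (0, 1) := by
    have e : ((0:Fin d → ℝ), w.2) = w.2 • ((0:Fin d → ℝ), (1:ℝ)) := by simp
    rw [e, map_smul, smul_eq_mul]
  have hw : (w.1, (0:ℝ)) + ((0:Fin d → ℝ), w.2) = w := by
    exact Prod.ext (by simp) (by simp)
  conv_lhs => rw [← hw]
  rw [map_add, h1, h2]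

lemma surjA {d N : ℕ} (hdN : d < N) (x : Fin N → (Fin d → ℝ))
    (hgen : ∀ (h : Fin d → ℝ) (b : ℝ), h ≠ 0 →
      Set.ncard {i : Fin N | (∑ j, h j * x i j) + b = 0} ≤ d) :
    ∀ S : Finset (Fin N), S.card ≤ d + 1 → ∀ t : Fin N → ℝ,
      ∃ w : (Fin d → ℝ) × ℝ, ∀ i ∈ S, phiMap (x i) w = t i := by
  intro S hS t
  obtain ⟨S', hSS', hS'⟩ := Finset.exists_superset_card_eq hS (by simpa using hdN)
  suffices h : ∃ w : (Fin d → ℝ) × ℝ, ∀ i ∈ S', phiMap (x i) w = t i by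
    obtain ⟨w, hw⟩ := h
    exact ⟨w, fun i hi => hw i (hSS' hi)⟩
  by_contra hno
  have hna : ¬ ∀ t' : ↥S' → ℝ, ∃ w : (Fin d → ℝ) × ℝ, ∀ i : ↥S', phiMap (x ↑i) w = t' i := by
    intro hall
    obtain ⟨w, hw⟩ := hall (fun i => t ↑i)
    exact hno ⟨w, fun i hi => hw ⟨i, hi⟩⟩
  obtain ⟨c, hc0, hcw⟩ := ann (fun i : ↥S' => phiMap (x ↑i)) hna
  -- dependency of the lifted points
  have hdep1 : ∑ i : ↥S', c i = 0 := by
    have h := hcw (0, 1)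
    simp only [phiMap_apply, Prod.fst, Pi.zero_apply, zero_mul, Finset.sum_const_zero,
      zero_add, mul_one] at h
    simpa using h
  have hdepx : ∀ j, ∑ i : ↥S', c i * x (↑i) j = 0 := by
    intro j
    have h := hcw (fun j' => if j = j' then 1 else 0, 0)
    simp only [phiMap_apply, ite_mul, one_mul, zero_mul, Finset.sum_ite_eq, Finset.mem_univ,
      if_true, add_zero] at h
    exact h
  -- the span of the lifted points is a proper subspace
  obtain ⟨i0, hi0⟩ : ∃ i0 : ↥S', c i0 ≠ 0 := by
    by_contra hcc
    push_neg at hcc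
    exact hc0 (funext hcc)
  set v : ↥S' → (Fin d → ℝ) × ℝ := fun i => (x ↑i, 1) with hvdef
  have hdepv : ∑ i : ↥S', c i • v i = 0 := by
    have h1 : (∑ i : ↥S', c i • v i).1 = 0 := by
      rw [Prod.fst_sum]
      funext j
      rw [Finset.sum_apply]
      simpa using hdepx j
    have h2 : (∑ i : ↥S', c i • v i).2 = 0 := by
      rw [Prod.snd_sum]
      simpa [hvdef] using hdep1
    exact Prod.ext h1 h2
  have hspan : Submodule.span ℝ (Set.range v) < ⊤ := by
    set T : Finset ((Fin d → ℝ) × ℝ) := (Finset.univ.erase i0).image v with hT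
    have hsub2 : Submodule.span ℝ (Set.range v) ≤ Submodule.span ℝ (T : Set ((Fin d → ℝ) × ℝ)) := by
      rw [Submodule.span_le]
      rintro _ ⟨i, rfl⟩
      by_cases hii : i = i0
      · subst hii
        have hsum : ∑ k ∈ Finset.univ.erase i, c k • v k + c i • v i = 0 := by
          rw [Finset.sum_erase_add Finset.univ _ (Finset.mem_univ i)]
          exact hdepv
        have hvi : v i = (c i)⁻¹ • (-(∑ k ∈ Finset.univ.erase i, c k • v k)) := by
          have e : c i • v i = -(∑ k ∈ Finset.univ.erase i, c k • v k) :=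
            eq_neg_of_add_eq_zero_right hsum
          rw [← e, smul_smul, inv_mul_cancel₀ hi0, one_smul]
        rw [hvi]
        refine Submodule.smul_mem _ _ (Submodule.neg_mem _ (Submodule.sum_mem _ fun k hk =>
          Submodule.smul_mem _ _ (Submodule.subset_span ?_)))
        exact Finset.mem_coe.2 (Finset.mem_image_of_mem v hk)
      · exact Submodule.subset_span
          (Finset.mem_coe.2 (Finset.mem_image_of_mem v (Finset.mem_erase.2 ⟨hii, Finset.mem_univ i⟩)))
    have hfr : Module.finrank ℝ (Submodule.span ℝ (Set.range v)) ≤ d := by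
      calc Module.finrank ℝ (Submodule.span ℝ (Set.range v))
          ≤ Module.finrank ℝ (Submodule.span ℝ (T : Set ((Fin d → ℝ) × ℝ))) := Submodule.finrank_mono hsub2
        _ ≤ T.card := finrank_span_finset_le_card T
        _ ≤ (Finset.univ.erase i0).card := Finset.card_image_le
        _ ≤ d := by
            rw [Finset.card_erase_of_mem (Finset.mem_univ i0)]
            simp only [Finset.card_univ, Fintype.card_coe, hS']
            omega
    refine lt_of_le_of_ne le_top ?_
    intro htop
    have := finrank_top ℝ ((Fin d → ℝ) × ℝ)
    rw [← htop] at this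
    rw [this] at hfr
    rw [Module.finrank_prod, Module.finrank_pi, Module.finrank_self, Fintype.card_fin] at hfr
    omega
  obtain ⟨f, hf0, hfmap⟩ := Submodule.exists_dual_map_eq_bot_of_lt_top hspan inferInstance
  have hfv : ∀ i : ↥S', f (x ↑i, 1) = 0 := by
    intro i
    have hmem : v i ∈ Submodule.span ℝ (Set.range v) := Submodule.subset_span ⟨i, rfl⟩
    have hm2 : f (v i) ∈ Submodule.map f (Submodule.span ℝ (Set.range v)) := ⟨_, hmem, rfl⟩
    rw [hfmap] at hm2
    exact hm2
  set h : Fin d → ℝ := fun j => f (fun j' => if j = j' then 1 else 0, 0) with hh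
  set b : ℝ := f (0, 1) with hb
  have hform : ∀ i : ↥S', (∑ j, h j * x (↑i) j) + b = 0 := by
    intro i
    have h0 := hfv i
    rw [dual_decomp f (x ↑i, 1)] at h0
    simp only [one_mul] at h0
    rw [← h0]
    congr 1
    exact Finset.sum_congr rfl fun j _ => by simp only [hh]; ring
  have hne : h ≠ 0 := by
    intro hzero
    have hb0 : b ≠ 0 := by
      intro hbz
      apply hf0
      refine LinearMap.ext fun w => ?_
      rw [dual_decomp f w]
      have e1 : ∀ j : Fin d, f (fun j' => if j = j' then 1 else 0, 0) = h j := fun j => rfl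
      have e2 : f (0, 1) = b := rfl
      simp only [e1, e2, hzero, hbz]
      simp
    have h2 := hform i0
    rw [hzero] at h2
    simp only [Pi.zero_apply, zero_mul, Finset.sum_const_zero, zero_add] at h2
    exact hb0 h2
  have hcard : (d:ℕ) + 1 ≤ Set.ncard {i : Fin N | (∑ j, h j * x i j) + b = 0} := by
    have hsub : (↑S' : Set (Fin N)) ⊆ {i : Fin N | (∑ j, h j * x i j) + b = 0} := by
      intro i hi
      exact hform ⟨i, hi⟩
    calc (d:ℕ) + 1 = S'.card := hS'.symm
      _ = (↑S' : Set (Fin N)).ncard := (Set.ncard_coe_finset S').symm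
      _ ≤ _ := Set.ncard_le_ncard hsub (Set.toFinite _)
  have := hgen h b hne
  omega

lemma surjB {d N : ℕ} (x : Fin N → (Fin d → ℝ)) :
    ∀ S : Finset (Fin N), S.card = d + 2 → ¬ ∀ t : Fin N → ℝ,
      ∃ w : (Fin d → ℝ) × ℝ, ∀ i ∈ S, phiMap (x i) w = t i := by
  intro S hS hsurj
  have hFsurj : Function.Surjective (LinearMap.pi (fun i : ↥S => phiMap (x ↑i))) := by
    intro t
    obtain ⟨w, hw⟩ := hsurj (fun i => if h : i ∈ S then t ⟨i, h⟩ else 0)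
    refine ⟨w, funext fun i => ?_⟩
    rw [LinearMap.pi_apply]
    rw [hw ↑i i.2]
    simp [i.2]
  have hr : LinearMap.range (LinearMap.pi (fun i : ↥S => phiMap (x ↑i))) = ⊤ :=
    LinearMap.range_eq_top.2 hFsurj
  have h1 : Module.finrank ℝ (↥S → ℝ) ≤ Module.finrank ℝ ((Fin d → ℝ) × ℝ) := by
    rw [← finrank_top ℝ (↥S → ℝ), ← hr]
    exact LinearMap.finrank_range_le _
  rw [Module.finrank_pi, Module.finrank_prod, Module.finrank_pi, Module.finrank_self,
    Fintype.card_coe, Fintype.card_fin, hS] at h1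
  omega

lemma closed_subset_strict {d N : ℕ} (hdN : d < N) (x : Fin N → (Fin d → ℝ))
    (hgen : ∀ (h : Fin d → ℝ) (b : ℝ), h ≠ 0 →
      Set.ncard {i : Fin N | (∑ j, h j * x i j) + b = 0} ≤ d) :
    {r : Fin N → Bool | ∃ w : (Fin d → ℝ) × ℝ, ∀ i, (r i = true ↔ 0 ≤ phiMap (x i) w)} ⊆
    {r : Fin N → Bool | ∃ w : (Fin d → ℝ) × ℝ,
      ∀ i, (r i = true ↔ 0 < phiMap (x i) w) ∧ phiMap (x i) w ≠ 0} := by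
  classical
  rintro r ⟨w, hw⟩
  by_cases hall : ∀ i, phiMap (x i) w = 0
  · refine ⟨(0, 1), fun i => ?_⟩
    have h1 : phiMap (x i) ((0 : Fin d → ℝ), (1:ℝ)) = 1 := by
      rw [phiMap_apply]; simp
    rw [h1]
    refine ⟨⟨fun _ => one_pos, fun _ => ?_⟩, one_ne_zero⟩
    exact (hw i).2 (le_of_eq (hall i).symm)
  · push_neg at hall
    obtain ⟨i1, hi1⟩ := hall
    set Z : Finset (Fin N) := Finset.univ.filter (fun i => phiMap (x i) w = 0) with hZ
    have hZcard : Z.card ≤ d := by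
      rcases eq_or_ne w.1 0 with h1 | h1
      · have hz : Z = ∅ := by
          rw [Finset.eq_empty_iff_forall_notMem]
          intro i hi
          rw [hZ, Finset.mem_filter] at hi
          apply hi1
          have e : ∀ k, phiMap (x k) w = w.2 := by
            intro k
            rw [phiMap_apply, h1]
            simp
          rw [e i1, ← e i, hi.2]
        rw [hz]
        simp
      · have := hgen w.1 w.2 h1
        have e : (↑Z : Set (Fin N)) = {i : Fin N | (∑ j, w.1 j * x i j) + w.2 = 0} := by
          ext i
          rw [Finset.mem_coe, hZ, Finset.mem_filter]
          simp [phiMap_apply]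
        calc Z.card = (↑Z : Set (Fin N)).ncard := (Set.ncard_coe_finset Z).symm
          _ ≤ d := by rw [e]; exact this
    obtain ⟨u, hu⟩ := surjA hdN x hgen Z (hZcard.trans (Nat.le_succ d)) (fun _ => 1)
    set T : Finset (Fin N) := Finset.univ.filter (fun i => phiMap (x i) w ≠ 0) with hT
    have hTne : T.Nonempty := ⟨i1, by simp [hT, hi1]⟩
    set ε : ℝ := T.inf' hTne (fun i => |phiMap (x i) w| / (|phiMap (x i) u| + 1)) with hε
    have hεpos : 0 < ε := by
      rw [hε, Finset.lt_inf'_iff]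
      intro i hi
      rw [hT, Finset.mem_filter] at hi
      exact div_pos (abs_pos.2 hi.2) (by positivity)
    refine ⟨w + ε • u, fun i => ?_⟩
    have hval : phiMap (x i) (w + ε • u) = phiMap (x i) w + ε * phiMap (x i) u := by
      rw [map_add, map_smul, smul_eq_mul]
    by_cases hzi : phiMap (x i) w = 0
    · have hiZ : i ∈ Z := by rw [hZ, Finset.mem_filter]; exact ⟨Finset.mem_univ i, hzi⟩
      have : phiMap (x i) (w + ε • u) = ε := by
        rw [hval, hzi, hu i hiZ, zero_add, mul_one]
      rw [this]
      exact ⟨⟨fun _ => hεpos, fun _ => (hw i).2 (le_of_eq hzi.symm)⟩, hεpos.ne'⟩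
    · have hiT : i ∈ T := by rw [hT, Finset.mem_filter]; exact ⟨Finset.mem_univ i, hzi⟩
      have hεle : ε ≤ |phiMap (x i) w| / (|phiMap (x i) u| + 1) :=
        Finset.inf'_le _ hiT
      have hsmall : |ε * phiMap (x i) u| < |phiMap (x i) w| := by
        rw [abs_mul, abs_of_pos hεpos]
        set A := |phiMap (x i) u| with hA
        set Wv := |phiMap (x i) w| with hWv
        have hA0 : 0 ≤ A := abs_nonneg _
        have hW0 : 0 < Wv := abs_pos.2 hzi
        have h1 : ε * A ≤ Wv / (A + 1) * A :=
          mul_le_mul_of_nonneg_right hεle hA0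
        have h2 : Wv / (A + 1) * (A + 1) = Wv := by
          field_simp
        nlinarith [div_pos hW0 (show (0:ℝ) < A + 1 by linarith)]
      rcases lt_or_gt_of_ne hzi with hneg | hpos
      · have : phiMap (x i) (w + ε • u) < 0 := by
          rw [hval]
          have := abs_lt.1 hsmall
          rw [abs_of_neg hneg] at this
          linarith [this.2]
        have hrf : r i = false := by
          rcases Bool.eq_false_or_eq_true (r i) with h | h
          · exact absurd ((hw i).1 h) (not_le.2 hneg)
          · exact h
        rw [hrf]
        exact ⟨⟨fun h => Bool.noConfusion h, fun h => absurd h (not_lt.2 this.le)⟩, this.ne⟩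
      · have : 0 < phiMap (x i) (w + ε • u) := by
          rw [hval]
          have := abs_lt.1 hsmall
          rw [abs_of_pos hpos] at this
          linarith [this.1]
        exact ⟨⟨fun _ => this, fun _ => (hw i).2 hpos.le⟩, this.ne'⟩

lemma strictCount {d N' : ℕ} (hdN : d < N' + 1) (x : Fin (N' + 1) → (Fin d → ℝ))
    (hgen : ∀ (h : Fin d → ℝ) (b : ℝ), h ≠ 0 →
      Set.ncard {i : Fin (N' + 1) | (∑ j, h j * x i j) + b = 0} ≤ d) :
    {r : Fin (N' + 1) → Bool | ∃ w : (Fin d → ℝ) × ℝ,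
      ∀ i, (r i = true ↔ 0 < phiMap (x i) w) ∧ phiMap (x i) w ≠ 0}.ncard
      ≤ 2 * ∑ j ∈ Finset.range (d + 1), N'.choose j := by
  classical
  set φ0 : ((Fin d → ℝ) × ℝ) →ₗ[ℝ] ℝ := phiMap (x 0) with hφ0
  set ψ : Fin N' → (((Fin d → ℝ) × ℝ) →ₗ[ℝ] ℝ) := fun i => phiMap (x i.succ) with hψ
  have ha : ∀ S : Finset (Fin N'), S.card ≤ d → ∀ (r : ℝ) (t : Fin N' → ℝ),
      ∃ w, φ0 w = r ∧ ∀ i ∈ S, ψ i w = t i := by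
    intro S hS r t
    obtain ⟨w, hw⟩ := surjA hdN x hgen (insert 0 (S.map (Fin.succEmb N')))
      (le_trans (Finset.card_insert_le _ _) (by rw [Finset.card_map]; omega))
      (Fin.cases r t)
    refine ⟨w, ?_, fun i hi => ?_⟩
    · have := hw 0 (Finset.mem_insert_self _ _)
      rwa [Fin.cases_zero] at this
    · have := hw i.succ (Finset.mem_insert_of_mem (Finset.mem_map_of_mem _ hi))
      rwa [Fin.cases_succ] at this
  have hb : ∀ S : Finset (Fin N'), S.card = d + 1 → ¬ ∀ (r : ℝ) (t : Fin N' → ℝ),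
      ∃ w, φ0 w = r ∧ ∀ i ∈ S, ψ i w = t i := by
    intro S hS hsurj
    have h0notin : (0 : Fin (N' + 1)) ∉ S.map (Fin.succEmb N') := by
      intro hmem
      obtain ⟨i, _, hie⟩ := Finset.mem_map.1 hmem
      exact Fin.succ_ne_zero i hie
    apply surjB x (insert 0 (S.map (Fin.succEmb N')))
      (by rw [Finset.card_insert_of_notMem h0notin, Finset.card_map, hS])
    intro t
    obtain ⟨w, hw1, hw2⟩ := hsurj (t 0) (fun i => t i.succ)
    refine ⟨w, fun j hj => ?_⟩
    rcases Finset.mem_insert.1 hj with rfl | hj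
    · exact hw1
    · obtain ⟨i, hi, rfl⟩ := Finset.mem_map.1 hj
      exact hw2 i hi
  have haff := affCount N' d ((Fin d → ℝ) × ℝ) φ0 ψ ha hb
  set Aff : Set (Fin N' → Bool) :=
    {σ | ∃ w, φ0 w = 1 ∧ ∀ i, (σ i = true ↔ 0 < ψ i w) ∧ ψ i w ≠ 0} with hAff
  set SS : Set (Fin (N' + 1) → Bool) :=
    {r | ∃ w : (Fin d → ℝ) × ℝ,
      ∀ i, (r i = true ↔ 0 < phiMap (x i) w) ∧ phiMap (x i) w ≠ 0} with hSS
  set st := SS ∩ {σ | σ 0 = true} with hst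
  set sf := SS ∩ {σ | σ 0 = false} with hsf
  have hsplit : SS = st ∪ sf := by
    ext σ
    simp only [hst, hsf, Set.mem_union, Set.mem_inter_iff, Set.mem_setOf_eq]
    constructor
    · intro h
      rcases Bool.eq_false_or_eq_true (σ 0) with h' | h'
      · exact Or.inl ⟨h, h'⟩
      · exact Or.inr ⟨h, h'⟩
    · rintro (⟨h, _⟩ | ⟨h, _⟩) <;> exact h
  have hdisj : Disjoint st sf := by
    rw [Set.disjoint_left]
    rintro σ ⟨_, h1⟩ ⟨_, h0⟩
    simp only [Set.mem_setOf_eq] at h1 h0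
    rw [h1] at h0
    exact Bool.noConfusion h0
  -- scaling: positive scalar preserves strict signs
  have hscale : ∀ (w : (Fin d → ℝ) × ℝ) (i : Fin (N' + 1)) (c : ℝ), 0 < c →
      (0 < phiMap (x i) (c • w) ↔ 0 < phiMap (x i) w) := by
    intro w i c hc
    rw [map_smul, smul_eq_mul]
    constructor
    · intro h
      nlinarith
    · intro h
      exact mul_pos hc h
  have hmapt : ∀ σ ∈ st, (fun i => σ i.succ) ∈ Aff := by
    rintro σ ⟨⟨w, hw⟩, hσ0⟩
    simp only [Set.mem_setOf_eq] at hσ0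
    have hpos : 0 < φ0 w := (hw 0).1.1 hσ0
    refine ⟨(φ0 w)⁻¹ • w, ?_, fun i => ?_⟩
    · rw [map_smul, smul_eq_mul, inv_mul_cancel₀ hpos.ne']
    · have hc : 0 < (φ0 w)⁻¹ := inv_pos.2 hpos
      constructor
      · rw [hscale w i.succ _ hc]
        exact (hw i.succ).1
      · have e : ψ i ((φ0 w)⁻¹ • w) = (φ0 w)⁻¹ * ψ i w := by
          rw [hψ]
          simp only [map_smul, smul_eq_mul]
        rw [e]
        exact mul_ne_zero hc.ne' (hw i.succ).2
  have hmapf : ∀ σ ∈ sf, (fun i => !(σ i.succ)) ∈ Aff := by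
    rintro σ ⟨⟨w, hw⟩, hσ0⟩
    simp only [Set.mem_setOf_eq] at hσ0
    have hneg : φ0 w < 0 := by
      rcases lt_trichotomy (φ0 w) 0 with h | h | h
      · exact h
      · exact absurd h (hw 0).2
      · rw [(hw 0).1.2 h] at hσ0; exact Bool.noConfusion hσ0
    have hpos : 0 < φ0 (-w) := by rw [map_neg]; linarith
    refine ⟨(φ0 (-w))⁻¹ • (-w), ?_, fun i => ?_⟩
    · rw [map_smul, smul_eq_mul, inv_mul_cancel₀ hpos.ne']
    · have hc : 0 < (φ0 (-w))⁻¹ := inv_pos.2 hpos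
      have hsign : ∀ k : Fin (N' + 1), phiMap (x k) w ≠ 0 →
          ((! (σ k)) = true ↔ 0 < phiMap (x k) (-w)) := by
        intro k hk
        rw [map_neg]
        rcases lt_trichotomy (phiMap (x k) w) 0 with h | h | h
        · have : σ k = false := by
            rcases Bool.eq_false_or_eq_true (σ k) with h' | h'
            · exact absurd ((hw k).1.1 h') (not_lt.2 h.le)
            · exact h'
          rw [this]
          simp only [Bool.not_false, true_iff]
          linarith
        · exact absurd h hk
        · rw [(hw k).1.2 h]
          simp only [Bool.not_true]
          constructor
          · intro hcontra
            exact Bool.noConfusion hcontra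
          · intro hlt
            exact absurd h (by linarith)
      constructor
      · rw [hscale (-w) i.succ _ hc]
        exact hsign i.succ (hw i.succ).2
      · have e : ψ i ((φ0 (-w))⁻¹ • (-w)) = (φ0 (-w))⁻¹ * ψ i (-w) := by
          rw [hψ]
          simp only [map_smul, smul_eq_mul]
        rw [e]
        refine mul_ne_zero hc.ne' ?_
        rw [hψ]
        simp only [map_neg, ne_eq, neg_eq_zero]
        exact (hw i.succ).2
  -- injectivity of restriction maps
  have hinjt : Set.InjOn (fun (σ : Fin (N'+1) → Bool) (i : Fin N') => σ i.succ) st := by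
    intro σ hσ σ' hσ' hres
    funext i
    refine Fin.cases ?_ ?_ i
    · have h1 : σ 0 = true := hσ.2
      have h2 : σ' 0 = true := hσ'.2
      rw [h1, h2]
    · intro j
      exact congrFun hres j
  have hinjf : Set.InjOn (fun (σ : Fin (N'+1) → Bool) (i : Fin N') => !(σ i.succ)) sf := by
    intro σ hσ σ' hσ' hres
    funext i
    refine Fin.cases ?_ ?_ i
    · have h1 : σ 0 = false := hσ.2
      have h2 : σ' 0 = false := hσ'.2
      rw [h1, h2]
    · intro j
      have := congrFun hres j
      simp only at this
      exact Bool.not_inj this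
  calc SS.ncard = st.ncard + sf.ncard := by
        rw [hsplit]
        exact Set.ncard_union_eq hdisj (Set.toFinite _) (Set.toFinite _)
    _ ≤ Aff.ncard + Aff.ncard := by
        refine add_le_add ?_ ?_
        · exact Set.ncard_le_ncard_of_injOn _ hmapt hinjt (Set.toFinite _)
        · exact Set.ncard_le_ncard_of_injOn _ hmapf hinjf (Set.toFinite _)
    _ ≤ 2 * ∑ j ∈ Finset.range (d + 1), N'.choose j := by
        rw [two_mul]
        exact add_le_add haff haff

lemma chooseSumBound {d N' : ℕ} (hdN : d < N' + 1) :
    ∑ j ∈ Finset.range (d + 1), N'.choose j ≤ 2 ^ d * (N' + 1).choose d := by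
  calc ∑ j ∈ Finset.range (d + 1), N'.choose j
      ≤ ∑ j ∈ Finset.range (d + 1), d.choose j * (N' + 1).choose d := by
        refine Finset.sum_le_sum fun j hj => ?_
        rw [Finset.mem_range] at hj
        have hj' : j ≤ d := by omega
        have hle : N'.choose j ≤ (N' + 1).choose j := Nat.choose_le_choose j (Nat.le_succ N')
        refine hle.trans ?_
        have hid := Nat.choose_mul (n := N' + 1) (k := d) hj'
        have hpos : 0 < (N' + 1 - j).choose (d - j) := Nat.choose_pos (by omega)
        calc (N' + 1).choose j ≤ (N' + 1).choose j * (N' + 1 - j).choose (d - j) :=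
              Nat.le_mul_of_pos_right _ hpos
          _ = (N' + 1).choose d * d.choose j := hid.symm
          _ = d.choose j * (N' + 1).choose d := Nat.mul_comm _ _
      _ = (∑ j ∈ Finset.range (d + 1), d.choose j) * (N' + 1).choose d := by
          rw [Finset.sum_mul]
      _ = 2 ^ d * (N' + 1).choose d := by rw [Nat.sum_range_choose]

lemma closedCount {d N' : ℕ} (hdN : d < N' + 1) (x : Fin (N' + 1) → (Fin d → ℝ))
    (hgen : ∀ (h : Fin d → ℝ) (b : ℝ), h ≠ 0 →
      Set.ncard {i : Fin (N' + 1) | (∑ j, h j * x i j) + b = 0} ≤ d) :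
    {r : Fin (N' + 1) → Bool | ∃ w : (Fin d → ℝ) × ℝ,
      ∀ i, (r i = true ↔ 0 ≤ phiMap (x i) w)}.ncard ≤ 2 ^ (d + 1) * (N' + 1).choose d := by
  have h1 := Set.ncard_le_ncard (closed_subset_strict hdN x hgen) (Set.toFinite _)
  have h2 := strictCount hdN x hgen
  have h3 := chooseSumBound hdN
  calc _ ≤ _ := h1.trans h2
    _ ≤ 2 * (2 ^ d * (N' + 1).choose d) := Nat.mul_le_mul_left 2 h3
    _ = 2 ^ (d + 1) * (N' + 1).choose d := by ring

section Pairs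
variable (n : ℕ)

lemma cardPairs : Fintype.card {p : Fin n × Fin n // p.1 < p.2} = n * (n - 1) / 2 := by
  classical
  rw [Fintype.card_subtype]
  have hset : (Finset.univ.filter fun p : Fin n × Fin n => p.1 < p.2)
      = Finset.univ.biUnion (fun b : Fin n => (Finset.Iio b).image (fun a => (a, b))) := by
    ext ⟨a, b⟩
    simp only [Finset.mem_filter, Finset.mem_univ, true_and, Finset.mem_biUnion,
      Finset.mem_image, Finset.mem_Iio, Prod.mk.injEq]
    constructor
    · intro h
      exact ⟨b, ⟨a, h, rfl, rfl⟩⟩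
    · rintro ⟨b', a', ha', rfl, rfl⟩
      exact ha'
  rw [hset, Finset.card_biUnion]
  · have h1 : ∀ b : Fin n, ((Finset.Iio b).image (fun a => (a, b))).card = (b : ℕ) := by
      intro b
      rw [Finset.card_image_of_injective _ (fun a a' h => (Prod.ext_iff.1 h).1),
        Fin.card_Iio]
    rw [Finset.sum_congr rfl (fun b _ => h1 b)]
    rw [Fin.sum_univ_eq_sum_range (fun i => i) n]
    have := Finset.sum_range_id_mul_two n
    omega
  · intro b _ b' _ hbb'
    simp only [Finset.disjoint_left, Finset.mem_image, Finset.mem_Iio]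
    rintro _ ⟨a, _, rfl⟩ ⟨a', _, h⟩
    exact hbb' ((Prod.ext_iff.1 h).2).symm

end Pairs

theorem stmt6 (d N n : ℕ) (hdN : d < N) (hn : 2 ≤ n)
    (x : Fin N → (Fin d → ℝ))
    (hgen : ∀ (h : Fin d → ℝ) (b : ℝ), h ≠ 0 →
      Set.ncard {i : Fin N | (∑ j, h j * x i j) + b = 0} ≤ d) :
    Set.ncard {q : Fin N → Fin n | ∃ (H : Fin n → Fin d → ℝ) (B : Fin n → ℝ),
        ∀ i, (∀ k, (∑ j, H k j * x i j) + B k ≤ (∑ j, H (q i) j * x i j) + B (q i)) ∧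
             (∀ k, (∀ l, (∑ j, H l j * x i j) + B l ≤ (∑ j, H k j * x i j) + B k) → q i ≤ k)}
      ≤ (2 ^ (d + 1) * N.choose d) ^ (n * (n - 1) / 2) := by
  classical
  set Q : Set (Fin N → Fin n) := {q | ∃ (H : Fin n → Fin d → ℝ) (B : Fin n → ℝ),
        ∀ i, (∀ k, (∑ j, H k j * x i j) + B k ≤ (∑ j, H (q i) j * x i j) + B (q i)) ∧
             (∀ k, (∀ l, (∑ j, H l j * x i j) + B l ≤ (∑ j, H k j * x i j) + B k) → q i ≤ k)}
    with hQ
  set Closed : Set (Fin N → Bool) := {r | ∃ w : (Fin d → ℝ) × ℝ,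
      ∀ i, (r i = true ↔ 0 ≤ phiMap (x i) w)} with hClosed
  -- the pattern of a classifier
  set pat : (Fin n → Fin d → ℝ) → (Fin n → ℝ) → {p : Fin n × Fin n // p.1 < p.2} →
      (Fin N → Bool) := fun H B p i =>
    decide ((∑ j, H p.val.2 j * x i j) + B p.val.2 ≤ (∑ j, H p.val.1 j * x i j) + B p.val.1)
    with hpatdef
  -- the key comparison lemma
  have key : ∀ (H B H' B' : _) (q q' : Fin N → Fin n),
      (∀ i, (∀ k, (∑ j, H k j * x i j) + B k ≤ (∑ j, H (q i) j * x i j) + B (q i)) ∧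
        (∀ k, (∀ l, (∑ j, H l j * x i j) + B l ≤ (∑ j, H k j * x i j) + B k) → q i ≤ k)) →
      (∀ i, (∀ k, (∑ j, H' k j * x i j) + B' k ≤ (∑ j, H' (q' i) j * x i j) + B' (q' i)) ∧
        (∀ k, (∀ l, (∑ j, H' l j * x i j) + B' l ≤ (∑ j, H' k j * x i j) + B' k) → q' i ≤ k)) →
      pat H B = pat H' B' → ∀ i, q i ≤ q' i := by
    intro H B H' B' q q' hq hq' hpat i
    refine (hq i).2 (q' i) ?_
    intro l
    rcases lt_trichotomy l (q' i) with hl | hl | hl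
    · have hbit : pat H' B' ⟨(l, q' i), hl⟩ i = false := by
        rcases Bool.eq_false_or_eq_true (pat H' B' ⟨(l, q' i), hl⟩ i) with h | h
        · exfalso
          have hle : (∑ j, H' (q' i) j * x i j) + B' (q' i) ≤ (∑ j, H' l j * x i j) + B' l :=
            of_decide_eq_true h
          have hmax : ∀ m, (∑ j, H' m j * x i j) + B' m ≤ (∑ j, H' l j * x i j) + B' l :=
            fun m => le_trans ((hq' i).1 m) hle
          exact absurd ((hq' i).2 l hmax) (not_le.2 hl)
        · exact h
      have hbit' : pat H B ⟨(l, q' i), hl⟩ i = false := by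
        rw [hpat]; exact hbit
      have : ¬ ((∑ j, H (q' i) j * x i j) + B (q' i) ≤ (∑ j, H l j * x i j) + B l) :=
        of_decide_eq_false hbit'
      exact (not_le.1 this).le
    · subst hl; exact le_refl _
    · have hbit : pat H' B' ⟨(q' i, l), hl⟩ i = true :=
        decide_eq_true ((hq' i).1 l)
      have hbit' : pat H B ⟨(q' i, l), hl⟩ i = true := by
        rw [hpat]; exact hbit
      exact of_decide_eq_true hbit'
  -- the encoding map
  set F : (Fin N → Fin n) → ({p : Fin n × Fin n // p.1 < p.2} → (Fin N → Bool)) :=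
    fun q => if hq : q ∈ Q then pat hq.choose hq.choose_spec.choose else fun _ _ => false
    with hF
  have hFmem : ∀ q ∈ Q, ∀ p, F q p ∈ Closed := by
    intro q hq p
    simp only [hF]
    rw [dif_pos hq]
    set H := hq.choose
    set B := hq.choose_spec.choose
    refine ⟨(fun j => H p.val.1 j - H p.val.2 j, B p.val.1 - B p.val.2), fun i => ?_⟩
    have hphi : phiMap (x i) (fun j => H p.val.1 j - H p.val.2 j, B p.val.1 - B p.val.2)
        = ((∑ j, H p.val.1 j * x i j) + B p.val.1)
          - ((∑ j, H p.val.2 j * x i j) + B p.val.2) := by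
      rw [phiMap_apply]
      simp only
      rw [Finset.sum_congr rfl (fun j _ => sub_mul (H p.val.1 j) (H p.val.2 j) (x i j)),
        Finset.sum_sub_distrib]
      ring
    rw [hphi, hpatdef]
    simp only [decide_eq_true_eq]
    rw [sub_nonneg]
  have hFinj : Set.InjOn F Q := by
    intro q hq q' hq' hFeq
    simp only [hF] at hFeq
    rw [dif_pos hq, dif_pos hq'] at hFeq
    have h1 := key _ _ _ _ q q' hq.choose_spec.choose_spec hq'.choose_spec.choose_spec hFeq
    have h2 := key _ _ _ _ q' q hq'.choose_spec.choose_spec hq.choose_spec.choose_spec hFeq.symm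
    funext i
    exact le_antisymm (h1 i) (h2 i)
  set T : Set ({p : Fin n × Fin n // p.1 < p.2} → (Fin N → Bool)) :=
    {g | ∀ p, g p ∈ Closed} with hT
  have hQT : Q.ncard ≤ T.ncard :=
    Set.ncard_le_ncard_of_injOn F (fun q hq => hFmem q hq) hFinj (Set.toFinite _)
  have hTcard : T.ncard = Closed.ncard ^ (n * (n - 1) / 2) := by
    rw [← cardPairs n]
    rw [← Nat.card_coe_set_eq, ← Nat.card_coe_set_eq]
    have e : ↥T ≃ ({p : Fin n × Fin n // p.1 < p.2} → ↥Closed) :=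
      { toFun := fun g => fun p => ⟨g.1 p, g.2 p⟩
        invFun := fun h => ⟨fun p => (h p).1, fun p => (h p).2⟩
        left_inv := fun g => rfl
        right_inv := fun h => rfl }
    rw [Nat.card_congr e, Nat.card_pi]
    rw [Finset.prod_const, Finset.card_univ]
  obtain ⟨N', rfl⟩ : ∃ N', N = N' + 1 := ⟨N - 1, by omega⟩
  have hclosed := closedCount hdN x hgen
  calc Q.ncard ≤ T.ncard := hQT
    _ = Closed.ncard ^ (n * (n - 1) / 2) := hTcard
    _ ≤ (2 ^ (d + 1) * (N' + 1).choose d) ^ (n * (n - 1) / 2) :=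
        Nat.pow_le_pow_left hclosed _
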